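/- arXiv:2211.12747 — 4 statements merged into one kernel-verified Lean document; each statement's English description precedes it below -/
import Mathlib

section
/- Let 0 < ε ≤ 1/10 and let A be a (1/4+ε, ∨)-dense reduced hypergraph with index set [M]. Then for any i < j < k in [M], we have ∑_{v ∈ P^{ik}} d_{Q^i_{jk}}(v)·d_{Q^k_{ij}}(v) ≥ (1/4 + ε/2)·|P^{ij}||P^{jk}||P^{ik}|. -/
open scoped Classical

/-- A reduced hypergraph with index set `Fin M`: pairwise disjoint nonempty finite
vertex classes `P i j` (for `i ≠ j`, with `P i j = P j i`), and an edge set `E`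
which is the union of the edge sets of the constituents, i.e. every edge consists
of one vertex from each of `P i j`, `P i k`, `P j k` for some `i < j < k`. -/
structure ReducedHypergraph (M : ℕ) where
  P : Fin M → Fin M → Finset ℕ
  P_symm : ∀ i j, P i j = P j i
  P_nonempty : ∀ i j, i ≠ j → (P i j).Nonempty
  P_disjoint : ∀ i j k l : Fin M, i ≠ j → k ≠ l →
    ({i, j} : Finset (Fin M)) ≠ {k, l} → Disjoint (P i j) (P k l)
  E : Finset (Finset ℕ)
  mem_E : ∀ e ∈ E, ∃ i j k : Fin M, i < j ∧ j < k ∧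
    ∃ a ∈ P i j, ∃ b ∈ P i k, ∃ c ∈ P j k, e = {a, b, c}

namespace ReducedHypergraph

variable {M : ℕ}

/-- The edges of the constituent `A^{ijk}`, recorded as triples in
`P i j × P i k × P j k`. -/
def conEdges (A : ReducedHypergraph M) (i j k : Fin M) : Finset (ℕ × ℕ × ℕ) :=
  (A.P i j ×ˢ A.P i k ×ˢ A.P j k).filter
    (fun t => ({t.1, t.2.1, t.2.2} : Finset ℕ) ∈ A.E)

/-- `A` is `(d, ∨)`-dense: every constituent `A^{ijk}` has at least
`d * |P^{ij}| * |P^{ik}| * |P^{jk}|` edges. -/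
def IsVeeDense (A : ReducedHypergraph M) (d : ℝ) : Prop :=
  ∀ i j k : Fin M, i < j → j < k →
    d * ((A.P i j).card : ℝ) * ((A.P i k).card : ℝ) * ((A.P j k).card : ℝ) ≤
      ((A.conEdges i j k).card : ℝ)

/-- Adjacency in the bipartite graph `Q^a_{bc}` (with parameter `ε`): `w ∈ P a b`
is joined to `v ∈ P a c` if at least `ε² * |P b c|` vertices `u ∈ P b c` satisfy
`{w, v, u} ∈ E`. -/
def Qadj (A : ReducedHypergraph M) (ε : ℝ) (a b c : Fin M) (w v : ℕ) : Prop :=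
  w ∈ A.P a b ∧ v ∈ A.P a c ∧
    ε ^ 2 * ((A.P b c).card : ℝ) ≤
      (((A.P b c).filter (fun u => ({w, v, u} : Finset ℕ) ∈ A.E)).card : ℝ)

/-- The degree in `Q^a_{bc}` of a vertex `v` on the `P a c` side, i.e. the number
of its neighbours in `P a b`. -/
noncomputable def degQ (A : ReducedHypergraph M) (ε : ℝ) (a b c : Fin M) (v : ℕ) : ℕ :=
  ((A.P a b).filter (fun w => A.Qadj ε a b c w v)).card

/-- The degree in `Q^a_{bc}` of a vertex `w` on the `P a b` side, i.e. the number
of its neighbours in `P a c`. -/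
noncomputable def degQrev (A : ReducedHypergraph M) (ε : ℝ) (a b c : Fin M) (w : ℕ) : ℕ :=
  ((A.P a c).filter (fun v => A.Qadj ε a b c w v)).card

/-- The set `S^i_{jk}(r)` (with parameters `ε, δ`): vertices `x ∈ P i k` whose
degree in `Q^i_{jk}` is at least `(1/2 + r δ) * |P i j|`. -/
noncomputable def Sset (A : ReducedHypergraph M) (ε δ : ℝ) (i j k : Fin M) (r : ℕ) :
    Finset ℕ :=
  (A.P i k).filter (fun x => ((1 : ℝ) / 2 + (r : ℝ) * δ) * ((A.P i j).card : ℝ) ≤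
    (A.degQ ε i j k x : ℝ))

/-- Condition (⋆) for parameters `ε, δ, r*`: every `i < j < k` satisfies
`∑_{v ∈ P^{ik}} d_{Q^i_{jk}}(v)² ≥ (1/4 + ε/2) |P^{ij}|² |P^{ik}|` and
`|S^i_{jk}(r*)| ≥ δ |P^{ik}| > |S^i_{jk}(r*+1)|`. -/
def StarCond (A : ReducedHypergraph M) (ε δ : ℝ) (rstar : ℕ) : Prop :=
  ∀ i j k : Fin M, i < j → j < k →
    ((1 / 4 + ε / 2) * ((A.P i j).card : ℝ) ^ 2 * ((A.P i k).card : ℝ) ≤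
      ∑ v ∈ A.P i k, ((A.degQ ε i j k v : ℝ)) ^ 2) ∧
    δ * ((A.P i k).card : ℝ) ≤ ((A.Sset ε δ i j k rstar).card : ℝ) ∧
    ((A.Sset ε δ i j k (rstar + 1)).card : ℝ) < δ * ((A.P i k).card : ℝ)

end ReducedHypergraph

open ReducedHypergraph in
/-- Lemma (sum of products of degrees): if `0 < ε ≤ 1/10` and `A` is a
`(1/4 + ε, ∨)`-dense reduced hypergraph with index set `[M]`, then for any
`i < j < k`, `∑_{v ∈ P^{ik}} d_{Q^i_{jk}}(v) · d_{Q^k_{ij}}(v) ≥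
(1/4 + ε/2) |P^{ij}| |P^{jk}| |P^{ik}|`. -/
theorem sum_deg_products {M : ℕ} (ε : ℝ) (hε0 : 0 < ε) (hε1 : ε ≤ 1 / 10)
    (A : ReducedHypergraph M) (hA : A.IsVeeDense (1 / 4 + ε))
    (i j k : Fin M) (hij : i < j) (hjk : j < k) :
    (1 / 4 + ε / 2) * ((A.P i j).card : ℝ) * ((A.P j k).card : ℝ) *
        ((A.P i k).card : ℝ) ≤
      ∑ v ∈ A.P i k, (A.degQ ε i j k v : ℝ) * (A.degQrev ε k i j v : ℝ) := by
  have hki : A.P k i = A.P i k := A.P_symm k i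
  have hkj : A.P k j = A.P j k := A.P_symm k j
  set X := A.P i j with hXdef
  set Y := A.P i k with hYdef
  set Z := A.P j k with hZdef
  have hXc : (0:ℝ) ≤ (X.card : ℝ) := by positivity
  have hYc : (0:ℝ) ≤ (Y.card : ℝ) := by positivity
  have hZc : (0:ℝ) ≤ (Z.card : ℝ) := by positivity
  -- edge count as a triple sum
  have hcount : ((A.conEdges i j k).card : ℝ)
      = ∑ v ∈ Y, ∑ w ∈ X, ∑ u ∈ Z,
          (if ({w, v, u} : Finset ℕ) ∈ A.E then (1:ℝ) else 0) := by
    rw [ReducedHypergraph.conEdges, Finset.card_filter]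
    push_cast
    rw [Finset.sum_product]
    simp only [Finset.sum_product]
    exact Finset.sum_comm
  have hdense := hA i j k hij hjk
  -- per-vertex bound
  have key : ∀ v ∈ Y,
      (∑ w ∈ X, ∑ u ∈ Z, (if ({w, v, u} : Finset ℕ) ∈ A.E then (1:ℝ) else 0))
        ≤ (A.degQ ε i j k v : ℝ) * (A.degQrev ε k i j v : ℝ)
            + 2 * ε ^ 2 * (X.card : ℝ) * (Z.card : ℝ) := by
    intro v hv
    have hsplit := Finset.sum_filter_add_sum_filter_not X
      (fun w => A.Qadj ε i j k w v)
      (fun w => ∑ u ∈ Z, (if ({w, v, u} : Finset ℕ) ∈ A.E then (1:ℝ) else 0))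
    rw [← hsplit]
    -- bad w part
    have hb1 : ∑ w ∈ X.filter (fun w => ¬ A.Qadj ε i j k w v),
        ∑ u ∈ Z, (if ({w, v, u} : Finset ℕ) ∈ A.E then (1:ℝ) else 0)
          ≤ ε ^ 2 * (X.card : ℝ) * (Z.card : ℝ) := by
      have h1 : ∀ w ∈ X.filter (fun w => ¬ A.Qadj ε i j k w v),
          ∑ u ∈ Z, (if ({w, v, u} : Finset ℕ) ∈ A.E then (1:ℝ) else 0)
            ≤ ε ^ 2 * (Z.card : ℝ) := by
        intro w hw
        rw [Finset.mem_filter] at hw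
        rw [Finset.sum_boole]
        by_contra hcon
        push_neg at hcon
        exact hw.2 ⟨hw.1, hv, le_of_lt hcon⟩
      calc ∑ w ∈ X.filter (fun w => ¬ A.Qadj ε i j k w v),
            ∑ u ∈ Z, (if ({w, v, u} : Finset ℕ) ∈ A.E then (1:ℝ) else 0)
          ≤ ∑ _w ∈ X.filter (fun w => ¬ A.Qadj ε i j k w v), ε ^ 2 * (Z.card : ℝ) :=
            Finset.sum_le_sum h1
        _ = ((X.filter (fun w => ¬ A.Qadj ε i j k w v)).card : ℝ) * (ε ^ 2 * (Z.card : ℝ)) := by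
            rw [Finset.sum_const, nsmul_eq_mul]
        _ ≤ (X.card : ℝ) * (ε ^ 2 * (Z.card : ℝ)) := by
            have := Finset.card_filter_le X (fun w => ¬ A.Qadj ε i j k w v)
            have h2 : ((X.filter (fun w => ¬ A.Qadj ε i j k w v)).card : ℝ) ≤ (X.card : ℝ) := by
              exact_mod_cast this
            apply mul_le_mul_of_nonneg_right h2
            positivity
        _ = ε ^ 2 * (X.card : ℝ) * (Z.card : ℝ) := by ring
    -- good w part
    have hb2 : ∑ w ∈ X.filter (fun w => A.Qadj ε i j k w v),
        ∑ u ∈ Z, (if ({w, v, u} : Finset ℕ) ∈ A.E then (1:ℝ) else 0)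
          ≤ (A.degQ ε i j k v : ℝ) * (A.degQrev ε k i j v : ℝ)
            + ε ^ 2 * (X.card : ℝ) * (Z.card : ℝ) := by
      set N1 := X.filter (fun w => A.Qadj ε i j k w v) with hN1
      rw [Finset.sum_comm]
      have hsplit2 := Finset.sum_filter_add_sum_filter_not Z
        (fun u => A.Qadj ε k i j v u)
        (fun u => ∑ w ∈ N1, (if ({w, v, u} : Finset ℕ) ∈ A.E then (1:ℝ) else 0))
      rw [← hsplit2]
      have hdegQ : (A.degQ ε i j k v : ℝ) = (N1.card : ℝ) := rfl
      have hdegQrev : (A.degQrev ε k i j v : ℝ)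
          = ((Z.filter (fun u => A.Qadj ε k i j v u)).card : ℝ) := by
        rw [ReducedHypergraph.degQrev, hkj]
      have hgood : ∑ u ∈ Z.filter (fun u => A.Qadj ε k i j v u),
          ∑ w ∈ N1, (if ({w, v, u} : Finset ℕ) ∈ A.E then (1:ℝ) else 0)
            ≤ (A.degQ ε i j k v : ℝ) * (A.degQrev ε k i j v : ℝ) := by
        have h1 : ∀ u ∈ Z.filter (fun u => A.Qadj ε k i j v u),
            ∑ w ∈ N1, (if ({w, v, u} : Finset ℕ) ∈ A.E then (1:ℝ) else 0)
              ≤ (N1.card : ℝ) := by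
          intro u _
          calc ∑ w ∈ N1, (if ({w, v, u} : Finset ℕ) ∈ A.E then (1:ℝ) else 0)
              ≤ ∑ _w ∈ N1, (1:ℝ) := by
                apply Finset.sum_le_sum
                intro w _
                split <;> norm_num
            _ = (N1.card : ℝ) := by rw [Finset.sum_const, nsmul_eq_mul, mul_one]
        calc ∑ u ∈ Z.filter (fun u => A.Qadj ε k i j v u),
            ∑ w ∈ N1, (if ({w, v, u} : Finset ℕ) ∈ A.E then (1:ℝ) else 0)
            ≤ ∑ _u ∈ Z.filter (fun u => A.Qadj ε k i j v u), (N1.card : ℝ) :=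
              Finset.sum_le_sum h1
          _ = ((Z.filter (fun u => A.Qadj ε k i j v u)).card : ℝ) * (N1.card : ℝ) := by
              rw [Finset.sum_const, nsmul_eq_mul]
          _ = (A.degQ ε i j k v : ℝ) * (A.degQrev ε k i j v : ℝ) := by
              rw [hdegQ, hdegQrev]; ring
      have hbad : ∑ u ∈ Z.filter (fun u => ¬ A.Qadj ε k i j v u),
          ∑ w ∈ N1, (if ({w, v, u} : Finset ℕ) ∈ A.E then (1:ℝ) else 0)
            ≤ ε ^ 2 * (X.card : ℝ) * (Z.card : ℝ) := by
        have h1 : ∀ u ∈ Z.filter (fun u => ¬ A.Qadj ε k i j v u),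
            ∑ w ∈ N1, (if ({w, v, u} : Finset ℕ) ∈ A.E then (1:ℝ) else 0)
              ≤ ε ^ 2 * (X.card : ℝ) := by
          intro u hu
          rw [Finset.mem_filter] at hu
          have hsub : ∑ w ∈ N1, (if ({w, v, u} : Finset ℕ) ∈ A.E then (1:ℝ) else 0)
              ≤ ∑ w ∈ X, (if ({w, v, u} : Finset ℕ) ∈ A.E then (1:ℝ) else 0) := by
            apply Finset.sum_le_sum_of_subset_of_nonneg (Finset.filter_subset _ _)
            intro w _ _
            split <;> norm_num
          refine hsub.trans ?_
          rw [Finset.sum_boole]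
          have hfe : X.filter (fun w => ({w, v, u} : Finset ℕ) ∈ A.E)
              = X.filter (fun w => ({v, u, w} : Finset ℕ) ∈ A.E) := by
            apply Finset.filter_congr
            intro w _
            have : ({w, v, u} : Finset ℕ) = ({v, u, w} : Finset ℕ) := by
              ext y
              simp only [Finset.mem_insert, Finset.mem_singleton]
              tauto
            rw [this]
          rw [hfe]
          by_contra hcon
          push_neg at hcon
          have hv' : v ∈ A.P k i := by rw [hki]; exact hv
          have hu' : u ∈ A.P k j := by rw [hkj]; exact hu.1
          exact hu.2 ⟨hv', hu', le_of_lt hcon⟩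
        calc ∑ u ∈ Z.filter (fun u => ¬ A.Qadj ε k i j v u),
            ∑ w ∈ N1, (if ({w, v, u} : Finset ℕ) ∈ A.E then (1:ℝ) else 0)
            ≤ ∑ _u ∈ Z.filter (fun u => ¬ A.Qadj ε k i j v u), ε ^ 2 * (X.card : ℝ) :=
              Finset.sum_le_sum h1
          _ = ((Z.filter (fun u => ¬ A.Qadj ε k i j v u)).card : ℝ) * (ε ^ 2 * (X.card : ℝ)) := by
              rw [Finset.sum_const, nsmul_eq_mul]
          _ ≤ (Z.card : ℝ) * (ε ^ 2 * (X.card : ℝ)) := by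
              have := Finset.card_filter_le Z (fun u => ¬ A.Qadj ε k i j v u)
              have h2 : ((Z.filter (fun u => ¬ A.Qadj ε k i j v u)).card : ℝ) ≤ (Z.card : ℝ) := by
                exact_mod_cast this
              apply mul_le_mul_of_nonneg_right h2
              positivity
          _ = ε ^ 2 * (X.card : ℝ) * (Z.card : ℝ) := by ring
      linarith
    linarith
  -- assemble
  have hsum : ∑ v ∈ Y, ∑ w ∈ X, ∑ u ∈ Z,
      (if ({w, v, u} : Finset ℕ) ∈ A.E then (1:ℝ) else 0)
        ≤ (∑ v ∈ Y, (A.degQ ε i j k v : ℝ) * (A.degQrev ε k i j v : ℝ))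
          + (Y.card : ℝ) * (2 * ε ^ 2 * (X.card : ℝ) * (Z.card : ℝ)) := by
    calc ∑ v ∈ Y, ∑ w ∈ X, ∑ u ∈ Z,
        (if ({w, v, u} : Finset ℕ) ∈ A.E then (1:ℝ) else 0)
        ≤ ∑ v ∈ Y, ((A.degQ ε i j k v : ℝ) * (A.degQrev ε k i j v : ℝ)
            + 2 * ε ^ 2 * (X.card : ℝ) * (Z.card : ℝ)) := Finset.sum_le_sum key
      _ = (∑ v ∈ Y, (A.degQ ε i j k v : ℝ) * (A.degQrev ε k i j v : ℝ))
          + (Y.card : ℝ) * (2 * ε ^ 2 * (X.card : ℝ) * (Z.card : ℝ)) := by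
          rw [Finset.sum_add_distrib, Finset.sum_const, nsmul_eq_mul]
  have hmain : (1 / 4 + ε) * (X.card : ℝ) * (Y.card : ℝ) * (Z.card : ℝ)
      ≤ (∑ v ∈ Y, (A.degQ ε i j k v : ℝ) * (A.degQrev ε k i j v : ℝ))
        + (Y.card : ℝ) * (2 * ε ^ 2 * (X.card : ℝ) * (Z.card : ℝ)) := by
    calc (1 / 4 + ε) * (X.card : ℝ) * (Y.card : ℝ) * (Z.card : ℝ)
        ≤ ((A.conEdges i j k).card : ℝ) := hdense
      _ = _ := hcount
      _ ≤ _ := hsum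
  have hXYZ : (0:ℝ) ≤ (X.card : ℝ) * (Y.card : ℝ) * (Z.card : ℝ) := by positivity
  nlinarith [mul_nonneg (mul_nonneg hXc hYc) hZc, sq_nonneg ε,
    mul_le_mul_of_nonneg_right hε1 (le_of_lt hε0)]
end

section
/- Let 0 < ε ≤ 1/10 and let A be a (1/4+ε, ∨)-dense reduced hypergraph with index set [M]. Then for any i < j < k in [M], at least one of the following holds: ∑_{v ∈ P^{ik}} d_{Q^i_{jk}}(v)² ≥ (1/4 + ε/2)·|P^{ij}|²|P^{ik}|, or ∑_{v ∈ P^{ik}} d_{Q^k_{ij}}(v)² ≥ (1/4 + ε/2)·|P^{jk}|²|P^{ik}|. -/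
open scoped Classical

section KeyBound
open Finset

open Finset

lemma triple_comm' (a b c : ℕ) : ({a, b, c} : Finset ℕ) = ({c, a, b} : Finset ℕ) := by
  ext x; simp only [Finset.mem_insert, Finset.mem_singleton]; tauto

lemma key_bound (E : Finset (Finset ℕ)) (s t : Finset ℕ) (v : ℕ) (ε : ℝ)
    (hε : 0 ≤ ε) :
    ((((s ×ˢ t).filter (fun p => ({p.1, v, p.2} : Finset ℕ) ∈ E)).card : ℝ)) ≤
      ((s.filter (fun w => ε ^ 2 * (t.card : ℝ) ≤
          ((t.filter (fun u => ({w, v, u} : Finset ℕ) ∈ E)).card : ℝ))).card : ℝ) *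
        ((t.filter (fun u => ε ^ 2 * (s.card : ℝ) ≤
          ((s.filter (fun w => ({w, v, u} : Finset ℕ) ∈ E)).card : ℝ))).card : ℝ) +
      ε ^ 2 * s.card * t.card + ε ^ 2 * s.card * t.card := by
  set H1 := s.filter (fun w => ε ^ 2 * (t.card : ℝ) ≤
      ((t.filter (fun u => ({w, v, u} : Finset ℕ) ∈ E)).card : ℝ)) with hH1
  set H2 := t.filter (fun u => ε ^ 2 * (s.card : ℝ) ≤
      ((s.filter (fun w => ({w, v, u} : Finset ℕ) ∈ E)).card : ℝ)) with hH2
  set F := (s ×ˢ t).filter (fun p => ({p.1, v, p.2} : Finset ℕ) ∈ E) with hF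
  have hsub : F ⊆ (F.filter (fun p => p.1 ∈ H1 ∧ p.2 ∈ H2)) ∪
      (F.filter (fun p => p.1 ∉ H1)) ∪ (F.filter (fun p => p.2 ∉ H2)) := by
    intro p hp
    simp only [Finset.mem_union, Finset.mem_filter]
    by_cases h1 : p.1 ∈ H1 <;> by_cases h2 : p.2 ∈ H2 <;> tauto
  have hcard : F.card ≤ (F.filter (fun p => p.1 ∈ H1 ∧ p.2 ∈ H2)).card +
      (F.filter (fun p => p.1 ∉ H1)).card + (F.filter (fun p => p.2 ∉ H2)).card := by
    calc F.card ≤ _ := Finset.card_le_card hsub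
      _ ≤ _ := (Finset.card_union_le _ _).trans
          (Nat.add_le_add_right (Finset.card_union_le _ _) _)
  -- bound first piece
  have hb1 : (F.filter (fun p => p.1 ∈ H1 ∧ p.2 ∈ H2)).card ≤ H1.card * H2.card := by
    rw [← Finset.card_product]
    apply Finset.card_le_card
    intro p hp
    simp only [Finset.mem_filter] at hp
    exact Finset.mem_product.2 ⟨hp.2.1, hp.2.2⟩
  -- bound second piece
  have hb2 : ((F.filter (fun p => p.1 ∉ H1)).card : ℝ) ≤ ε ^ 2 * s.card * t.card := by
    have heq : (F.filter (fun p => p.1 ∉ H1)).card =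
        ∑ w ∈ s, if w ∉ H1 then (t.filter (fun u => ({w, v, u} : Finset ℕ) ∈ E)).card
          else 0 := by
      rw [hF, Finset.filter_filter, Finset.card_filter, Finset.sum_product]
      refine Finset.sum_congr rfl fun w _ => ?_
      by_cases h : w ∈ H1
      · simp [h]
      · rw [if_pos h, Finset.card_filter]
        refine Finset.sum_congr rfl fun y _ => ?_
        simp only [and_iff_left h]
    rw [heq]
    push_cast
    calc (∑ w ∈ s, if w ∉ H1 then
            ((t.filter (fun u => ({w, v, u} : Finset ℕ) ∈ E)).card : ℝ) else 0)
        ≤ ∑ _w ∈ s, ε ^ 2 * (t.card : ℝ) := by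
          refine Finset.sum_le_sum fun w hw => ?_
          by_cases h : w ∈ H1
          · simp only [h, not_true_eq_false, if_false]
            positivity
          · simp only [h, not_false_eq_true, if_true]
            have : ¬ (ε ^ 2 * (t.card : ℝ) ≤
                ((t.filter (fun u => ({w, v, u} : Finset ℕ) ∈ E)).card : ℝ)) := by
              intro hc
              exact h (Finset.mem_filter.2 ⟨hw, hc⟩)
            linarith [le_of_not_ge this]
      _ = ε ^ 2 * s.card * t.card := by
          rw [Finset.sum_const, nsmul_eq_mul]; ring
  -- bound third piece
  have hb3 : ((F.filter (fun p => p.2 ∉ H2)).card : ℝ) ≤ ε ^ 2 * s.card * t.card := by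
    have heq : (F.filter (fun p => p.2 ∉ H2)).card =
        ∑ u ∈ t, if u ∉ H2 then (s.filter (fun w => ({w, v, u} : Finset ℕ) ∈ E)).card
          else 0 := by
      rw [hF, Finset.filter_filter, Finset.card_filter, Finset.sum_product, Finset.sum_comm]
      refine Finset.sum_congr rfl fun u _ => ?_
      by_cases h : u ∈ H2
      · simp [h]
      · rw [if_pos h, Finset.card_filter]
        refine Finset.sum_congr rfl fun y _ => ?_
        simp only [and_iff_left h]
    rw [heq]
    push_cast
    calc (∑ u ∈ t, if u ∉ H2 then
            ((s.filter (fun w => ({w, v, u} : Finset ℕ) ∈ E)).card : ℝ) else 0)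
        ≤ ∑ _u ∈ t, ε ^ 2 * (s.card : ℝ) := by
          refine Finset.sum_le_sum fun u hu => ?_
          by_cases h : u ∈ H2
          · simp only [h, not_true_eq_false, if_false]
            positivity
          · simp only [h, not_false_eq_true, if_true]
            have : ¬ (ε ^ 2 * (s.card : ℝ) ≤
                ((s.filter (fun w => ({w, v, u} : Finset ℕ) ∈ E)).card : ℝ)) := by
              intro hc
              exact h (Finset.mem_filter.2 ⟨hu, hc⟩)
            linarith [le_of_not_ge this]
      _ = ε ^ 2 * s.card * t.card := by
          rw [Finset.sum_const, nsmul_eq_mul]; ring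
  have := hcard
  have hcast : (F.card : ℝ) ≤ ((F.filter (fun p => p.1 ∈ H1 ∧ p.2 ∈ H2)).card : ℝ) +
      ((F.filter (fun p => p.1 ∉ H1)).card : ℝ) +
      ((F.filter (fun p => p.2 ∉ H2)).card : ℝ) := by exact_mod_cast hcard
  have hb1' : ((F.filter (fun p => p.1 ∈ H1 ∧ p.2 ∈ H2)).card : ℝ) ≤
      (H1.card : ℝ) * (H2.card : ℝ) := by exact_mod_cast hb1
  linarith

end KeyBound


section Aux
open Finset
variable {M : ℕ}

private lemma conEdges_card_eq (A : ReducedHypergraph M) (i j k : Fin M) :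
    (A.conEdges i j k).card =
      ∑ v ∈ A.P i k, ((A.P i j ×ˢ A.P j k).filter
        (fun p => ({p.1, v, p.2} : Finset ℕ) ∈ A.E)).card := by
  simp only [ReducedHypergraph.conEdges, Finset.card_filter, Finset.sum_product]
  rw [Finset.sum_comm]

private lemma degQ_eq (A : ReducedHypergraph M) (ε : ℝ) (i j k : Fin M) (v : ℕ)
    (hv : v ∈ A.P i k) :
    A.degQ ε i j k v = ((A.P i j).filter (fun w => ε ^ 2 * ((A.P j k).card : ℝ) ≤
      (((A.P j k).filter (fun u => ({w, v, u} : Finset ℕ) ∈ A.E)).card : ℝ))).card := by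
  unfold ReducedHypergraph.degQ
  congr 1
  apply Finset.filter_congr
  intro w hw
  simp [ReducedHypergraph.Qadj, hw, hv]

private lemma degQrev_eq (A : ReducedHypergraph M) (ε : ℝ) (i j k : Fin M) (v : ℕ)
    (hv : v ∈ A.P i k) :
    A.degQrev ε k i j v = ((A.P j k).filter (fun u => ε ^ 2 * ((A.P i j).card : ℝ) ≤
      (((A.P i j).filter (fun w => ({w, v, u} : Finset ℕ) ∈ A.E)).card : ℝ))).card := by
  unfold ReducedHypergraph.degQrev
  rw [A.P_symm k j]
  congr 1
  apply Finset.filter_congr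
  intro u hu
  have hv' : v ∈ A.P k i := by rw [A.P_symm]; exact hv
  have hu' : u ∈ A.P k j := by rw [A.P_symm]; exact hu
  simp only [ReducedHypergraph.Qadj, hv', hu', true_and]
  have hset : ∀ w : ℕ, ({v, u, w} : Finset ℕ) = ({w, v, u} : Finset ℕ) := by
    intro w; ext x; simp only [Finset.mem_insert, Finset.mem_singleton]; tauto
  simp only [hset]

end Aux

set_option maxHeartbeats 1600000 in
open ReducedHypergraph in
/-- If `0 < ε ≤ 1/10` and `A` is a `(1/4 + ε, ∨)`-dense reduced hypergraph with
index set `[M]`, then for any `i < j < k`, either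
`∑_{v ∈ P^{ik}} d_{Q^i_{jk}}(v)² ≥ (1/4 + ε/2) |P^{ij}|² |P^{ik}|` or
`∑_{v ∈ P^{ik}} d_{Q^k_{ij}}(v)² ≥ (1/4 + ε/2) |P^{jk}|² |P^{ik}|`. -/
theorem sum_deg_squares {M : ℕ} (ε : ℝ) (hε0 : 0 < ε) (hε1 : ε ≤ 1 / 10)
    (A : ReducedHypergraph M) (hA : A.IsVeeDense (1 / 4 + ε))
    (i j k : Fin M) (hij : i < j) (hjk : j < k) :
    (1 / 4 + ε / 2) * ((A.P i j).card : ℝ) ^ 2 * ((A.P i k).card : ℝ) ≤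
        ∑ v ∈ A.P i k, (A.degQ ε i j k v : ℝ) ^ 2 ∨
      (1 / 4 + ε / 2) * ((A.P j k).card : ℝ) ^ 2 * ((A.P i k).card : ℝ) ≤
        ∑ v ∈ A.P i k, (A.degQrev ε k i j v : ℝ) ^ 2 := by
  classical
  by_contra hcon
  push_neg at hcon
  obtain ⟨h1, h2⟩ := hcon
  have hik : i < k := hij.trans hjk
  have hs0 : 0 < ((A.P i j).card : ℝ) := by
    exact_mod_cast Finset.card_pos.2 (A.P_nonempty i j (ne_of_lt hij))
  have ht0 : 0 < ((A.P j k).card : ℝ) := by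
    exact_mod_cast Finset.card_pos.2 (A.P_nonempty j k (ne_of_lt hjk))
  have hm0 : 0 < ((A.P i k).card : ℝ) := by
    exact_mod_cast Finset.card_pos.2 (A.P_nonempty i k (ne_of_lt hik))
  have hE := hA i j k hij hjk
  have hcount : ((A.conEdges i j k).card : ℝ) =
      ∑ v ∈ A.P i k, (((A.P i j ×ˢ A.P j k).filter
        (fun p => ({p.1, v, p.2} : Finset ℕ) ∈ A.E)).card : ℝ) := by
    rw [conEdges_card_eq A i j k]; push_cast; ring
  have hper : ∀ v ∈ A.P i k,
      (((A.P i j ×ˢ A.P j k).filter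
        (fun p => ({p.1, v, p.2} : Finset ℕ) ∈ A.E)).card : ℝ) ≤
      (A.degQ ε i j k v : ℝ) * (A.degQrev ε k i j v : ℝ) +
        (ε ^ 2 * (A.P i j).card * (A.P j k).card +
          ε ^ 2 * (A.P i j).card * (A.P j k).card) := by
    intro v hv
    have hk := key_bound A.E (A.P i j) (A.P j k) v ε hε0.le
    rw [degQ_eq A ε i j k v hv, degQrev_eq A ε i j k v hv]
    linarith
  have htot : (1 / 4 + ε) * ((A.P i j).card : ℝ) * ((A.P i k).card : ℝ) *
      ((A.P j k).card : ℝ) ≤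
      (∑ v ∈ A.P i k, (A.degQ ε i j k v : ℝ) * (A.degQrev ε k i j v : ℝ)) +
        ((A.P i k).card : ℝ) *
          (ε ^ 2 * (A.P i j).card * (A.P j k).card +
            ε ^ 2 * (A.P i j).card * (A.P j k).card) := by
    calc (1 / 4 + ε) * ((A.P i j).card : ℝ) * ((A.P i k).card : ℝ) *
        ((A.P j k).card : ℝ) ≤ ((A.conEdges i j k).card : ℝ) := hE
      _ = ∑ v ∈ A.P i k, (((A.P i j ×ˢ A.P j k).filter
            (fun p => ({p.1, v, p.2} : Finset ℕ) ∈ A.E)).card : ℝ) := hcount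
      _ ≤ ∑ v ∈ A.P i k, ((A.degQ ε i j k v : ℝ) * (A.degQrev ε k i j v : ℝ) +
            (ε ^ 2 * (A.P i j).card * (A.P j k).card +
              ε ^ 2 * (A.P i j).card * (A.P j k).card)) :=
          Finset.sum_le_sum hper
      _ = _ := by rw [Finset.sum_add_distrib, Finset.sum_const, nsmul_eq_mul]
  have hAM : ∀ v ∈ A.P i k,
      2 * ((A.degQ ε i j k v : ℝ) * (A.degQrev ε k i j v : ℝ)) *
        (((A.P i j).card : ℝ) * ((A.P j k).card : ℝ)) ≤
      (A.degQ ε i j k v : ℝ) ^ 2 * ((A.P j k).card : ℝ) ^ 2 +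
        (A.degQrev ε k i j v : ℝ) ^ 2 * ((A.P i j).card : ℝ) ^ 2 := by
    intro v _
    nlinarith [sq_nonneg ((A.degQ ε i j k v : ℝ) * ((A.P j k).card : ℝ) -
      (A.degQrev ε k i j v : ℝ) * ((A.P i j).card : ℝ))]
  have hsumAM : 2 * (∑ v ∈ A.P i k, (A.degQ ε i j k v : ℝ) *
        (A.degQrev ε k i j v : ℝ)) * (((A.P i j).card : ℝ) * ((A.P j k).card : ℝ)) ≤
      (∑ v ∈ A.P i k, (A.degQ ε i j k v : ℝ) ^ 2) * ((A.P j k).card : ℝ) ^ 2 +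
        (∑ v ∈ A.P i k, (A.degQrev ε k i j v : ℝ) ^ 2) * ((A.P i j).card : ℝ) ^ 2 := by
    rw [Finset.sum_mul, Finset.sum_mul, ← Finset.sum_add_distrib]
    calc 2 * (∑ v ∈ A.P i k, (A.degQ ε i j k v : ℝ) * (A.degQrev ε k i j v : ℝ)) *
          (((A.P i j).card : ℝ) * ((A.P j k).card : ℝ))
        = ∑ v ∈ A.P i k, 2 * ((A.degQ ε i j k v : ℝ) * (A.degQrev ε k i j v : ℝ)) *
            (((A.P i j).card : ℝ) * ((A.P j k).card : ℝ)) := by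
          rw [Finset.mul_sum, Finset.sum_mul]
      _ ≤ _ := Finset.sum_le_sum hAM
  set S := ((A.P i j).card : ℝ)
  set T := ((A.P j k).card : ℝ)
  set Mc := ((A.P i k).card : ℝ)
  set X := ∑ v ∈ A.P i k, (A.degQ ε i j k v : ℝ) ^ 2
  set Y := ∑ v ∈ A.P i k, (A.degQrev ε k i j v : ℝ) ^ 2
  set Z := ∑ v ∈ A.P i k, (A.degQ ε i j k v : ℝ) * (A.degQrev ε k i j v : ℝ)
  have hX : X * T ^ 2 < (1 / 4 + ε / 2) * S ^ 2 * Mc * T ^ 2 :=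
    mul_lt_mul_of_pos_right h1 (by positivity)
  have hY : Y * S ^ 2 < (1 / 4 + ε / 2) * T ^ 2 * Mc * S ^ 2 :=
    mul_lt_mul_of_pos_right h2 (by positivity)
  have hZ : (1 / 4 + ε - 2 * ε ^ 2) * S * T * Mc ≤ Z := by linarith
  have hZ2 : ((1 / 4 + ε - 2 * ε ^ 2) * S * T * Mc) * (S * T) ≤ Z * (S * T) :=
    mul_le_mul_of_nonneg_right hZ (by positivity)
  have hgap : 0 < (ε - 4 * ε ^ 2) * (S ^ 2 * T ^ 2 * Mc) := by
    have : 0 < ε - 4 * ε ^ 2 := by nlinarith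
    positivity
  nlinarith [hsumAM, hZ2, hX, hY, hgap]
end

section
/- Let A be a reduced hypergraph with index set [M], let ε, δ > 0 satisfy (1/2+δ)² + δ ≤ 1/4 + ε/2, and let i < j < k in [M] satisfy ∑_{v ∈ P^{ik}} d_{Q^i_{jk}}(v)² ≥ (1/4 + ε/2)·|P^{ij}|²|P^{ik}|. Then |S^i_{jk}(1)| ≥ δ|P^{ik}|. -/
open scoped Classical

open ReducedHypergraph in
/-- If `ε, δ > 0` satisfy `(1/2 + δ)² + δ ≤ 1/4 + ε/2` and `i < j < k` satisfy
`∑_{v ∈ P^{ik}} d_{Q^i_{jk}}(v)² ≥ (1/4 + ε/2) |P^{ij}|² |P^{ik}|`, then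
`|S^i_{jk}(1)| ≥ δ |P^{ik}|`. -/
theorem Sset_one_large {M : ℕ} (A : ReducedHypergraph M) (ε δ : ℝ)
    (hε : 0 < ε) (hδ : 0 < δ)
    (hcond : (1 / 2 + δ) ^ 2 + δ ≤ 1 / 4 + ε / 2)
    (i j k : Fin M) (hij : i < j) (hjk : j < k)
    (hsum : (1 / 4 + ε / 2) * ((A.P i j).card : ℝ) ^ 2 * ((A.P i k).card : ℝ) ≤
      ∑ v ∈ A.P i k, (A.degQ ε i j k v : ℝ) ^ 2) :
    δ * ((A.P i k).card : ℝ) ≤ ((A.Sset ε δ i j k 1).card : ℝ) := by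
  classical
  set n : ℝ := ((A.P i j).card : ℝ) with hn_def
  set m : ℝ := ((A.P i k).card : ℝ) with hm_def
  have hn1 : (1:ℝ) ≤ n := by
    have hne : i ≠ j := Fin.ne_of_lt hij
    have := A.P_nonempty i j hne
    have h' : 1 ≤ (A.P i j).card := Finset.card_pos.mpr this
    rw [hn_def]; exact_mod_cast h'
  have hm0 : (0:ℝ) ≤ m := by positivity
  set p : ℕ → Prop := fun x => ((1:ℝ)/2 + ((1:ℕ):ℝ) * δ) * n ≤ (A.degQ ε i j k x : ℝ)
    with hp_def
  have hSeq : A.Sset ε δ i j k 1 = (A.P i k).filter p := rfl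
  have hdeg_le : ∀ v, (A.degQ ε i j k v : ℝ) ≤ n := by
    intro v
    have h' : (A.degQ ε i j k v) ≤ (A.P i j).card := Finset.card_filter_le _ _
    rw [hn_def]; exact_mod_cast h'
  have hsplit := Finset.sum_filter_add_sum_filter_not (A.P i k) p
    (fun v => (A.degQ ε i j k v : ℝ) ^ 2)
  have h1 : ∑ v ∈ (A.P i k).filter p, (A.degQ ε i j k v : ℝ) ^ 2 ≤
      (((A.P i k).filter p).card : ℝ) * n ^ 2 := by
    calc ∑ v ∈ (A.P i k).filter p, (A.degQ ε i j k v : ℝ) ^ 2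
        ≤ ∑ _v ∈ (A.P i k).filter p, n ^ 2 := by
          apply Finset.sum_le_sum
          intro v _
          have h0 : (0:ℝ) ≤ (A.degQ ε i j k v : ℝ) := by positivity
          nlinarith [hdeg_le v]
      _ = (((A.P i k).filter p).card : ℝ) * n ^ 2 := by
          rw [Finset.sum_const, nsmul_eq_mul]
  have h2 : ∑ v ∈ (A.P i k).filter (fun x => ¬ p x), (A.degQ ε i j k v : ℝ) ^ 2 ≤
      m * ((1/2 + δ) * n) ^ 2 := by
    calc ∑ v ∈ (A.P i k).filter (fun x => ¬ p x), (A.degQ ε i j k v : ℝ) ^ 2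
        ≤ ∑ _v ∈ (A.P i k).filter (fun x => ¬ p x), ((1/2 + δ) * n) ^ 2 := by
          apply Finset.sum_le_sum
          intro v hv
          have hv' := (Finset.mem_filter.mp hv).2
          rw [hp_def] at hv'
          push_neg at hv'
          simp only [Nat.cast_one, one_mul] at hv'
          have h0 : (0:ℝ) ≤ (A.degQ ε i j k v : ℝ) := by positivity
          nlinarith
      _ = (((A.P i k).filter (fun x => ¬ p x)).card : ℝ) * ((1/2 + δ) * n) ^ 2 := by
          rw [Finset.sum_const, nsmul_eq_mul]
      _ ≤ m * ((1/2 + δ) * n) ^ 2 := by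
          have hc : (((A.P i k).filter (fun x => ¬ p x)).card : ℝ) ≤ m := by
            have h' := Finset.card_filter_le (A.P i k) (fun x => ¬ p x)
            rw [hm_def]; exact_mod_cast h'
          have : (0:ℝ) ≤ ((1/2 + δ) * n) ^ 2 := by positivity
          nlinarith
  have key : (1/4 + ε/2) * n ^ 2 * m ≤
      ((A.Sset ε δ i j k 1).card : ℝ) * n ^ 2 + m * ((1/2 + δ) * n) ^ 2 := by
    rw [hSeq]
    calc (1/4 + ε/2) * n ^ 2 * m ≤ ∑ v ∈ A.P i k, (A.degQ ε i j k v : ℝ) ^ 2 := hsum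
      _ = _ + _ := hsplit.symm
      _ ≤ _ := add_le_add h1 h2
  have hn2 : (0:ℝ) < n ^ 2 := by positivity
  have hcard : (0:ℝ) ≤ ((A.Sset ε δ i j k 1).card : ℝ) := by positivity
  have hnsq : (1:ℝ) ≤ n ^ 2 := by nlinarith
  nlinarith [mul_le_mul_of_nonneg_right hcond (mul_nonneg hm0 hn2.le), key, hnsq, hδ.le, hm0,
    hcard, mul_nonneg (mul_nonneg hδ.le hm0) (sub_nonneg.mpr hnsq)]
end

section
/- Let ε, δ > 0 with 100δ ≤ ε ≤ 1/10, let r* ∈ ℕ with 1 ≤ r* ≤ 1/(2δ), and let A be a reduced hypergraph with index set [m] satisfying condition (⋆) for parameters ε, δ, r*. Then for any i < j₁ < j₂ < k in [m] and any x ∈ S^i_{j₁k}(r*) ∩ S^i_{j₂k}(r*), there are at least δ|P^{ij₁}||P^{ij₂}| triangles xyz in Q^i with y ∈ P^{ij₂} and z ∈ P^{ij₁}. -/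
open scoped Classical

lemma card_filter_product' {α β : Type*} [DecidableEq α] [DecidableEq β]
    (s : Finset α) (t : Finset β) (Q : α → β → Prop)
    [DecidablePred fun p : α × β => Q p.1 p.2] [∀ a, DecidablePred (Q a)] :
    ((s ×ˢ t).filter (fun p => Q p.1 p.2)).card
      = ∑ a ∈ s, (t.filter (fun b => Q a b)).card := by
  have h : ((s ×ˢ t).filter (fun p => Q p.1 p.2))
      = s.biUnion (fun a => (t.filter (fun b => Q a b)).image (fun b => (a, b))) := by
    ext ⟨a, b⟩
    simp [Finset.mem_product, Finset.mem_biUnion, Finset.mem_image, and_assoc]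
  rw [h, Finset.card_biUnion]
  · refine Finset.sum_congr rfl fun a _ => ?_
    exact Finset.card_image_of_injective _ (fun b b' h => by simpa using h)
  · intro a _ a' _ hne
    simp only [Finset.disjoint_left, Finset.mem_image]
    rintro ⟨u, v⟩ ⟨b, _, hb⟩ ⟨b', _, hb'⟩
    apply hne
    simp only [Prod.mk.injEq] at hb hb'; rw [hb.1, hb'.1]

lemma card_filter_not' {α : Type*} (s : Finset α) (q : α → Prop)
    [DecidablePred q] [DecidablePred fun a => ¬ q a] :
    (s.filter q).card + (s.filter (fun a => ¬ q a)).card = s.card := by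
  classical
  have hdisj : Disjoint (s.filter q) (s.filter (fun a => ¬ q a)) := by
    simp only [Finset.disjoint_left, Finset.mem_filter]
    rintro a ⟨-, h⟩ ⟨-, h'⟩
    exact h' h
  rw [← Finset.card_union_of_disjoint hdisj]
  congr 1
  ext a
  by_cases h : q a <;> simp [h]

set_option maxHeartbeats 2000000 in
open ReducedHypergraph in
/-- Lemma (many triangles): let `ε, δ > 0` with `100δ ≤ ε ≤ 1/10`, let
`1 ≤ r* ≤ 1/(2δ)`, and let `A` be a reduced hypergraph with index set `[m]`
satisfying condition (⋆). Then for any `i < j₁ < j₂ < k` and any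
`x ∈ S^i_{j₁k}(r*) ∩ S^i_{j₂k}(r*)`, there are at least `δ |P^{ij₁}| |P^{ij₂}|`
triangles `x y z` in `Q^i` with `y ∈ P^{ij₂}` and `z ∈ P^{ij₁}`. -/
theorem many_triangles {m : ℕ} (ε δ : ℝ) (hδ : 0 < δ)
    (hδε : 100 * δ ≤ ε) (hε : ε ≤ 1 / 10)
    (rstar : ℕ) (hr1 : 1 ≤ rstar) (hr2 : (rstar : ℝ) ≤ 1 / (2 * δ))
    (A : ReducedHypergraph m) (hstar : A.StarCond ε δ rstar)
    (i j1 j2 k : Fin m) (h1 : i < j1) (h2 : j1 < j2) (h3 : j2 < k)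
    (x : ℕ) (hx : x ∈ A.Sset ε δ i j1 k rstar ∩ A.Sset ε δ i j2 k rstar) :
    δ * ((A.P i j1).card : ℝ) * ((A.P i j2).card : ℝ) ≤
      ((((A.P i j2) ×ˢ (A.P i j1)).filter (fun p =>
        A.Qadj ε i j2 k p.1 x ∧ A.Qadj ε i j1 k p.2 x ∧
          A.Qadj ε i j1 j2 p.2 p.1)).card : ℝ) := by
    classical
  obtain ⟨hx1, hx2⟩ := Finset.mem_inter.mp hx
  obtain ⟨-, hN1⟩ := Finset.mem_filter.mp hx1
  obtain ⟨-, hN2⟩ := Finset.mem_filter.mp hx2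
  obtain ⟨hSS, -, hS'⟩ := hstar i j1 j2 h1 h2
  have hp1pos : (0:ℝ) < ((A.P i j1).card : ℝ) := by
    exact_mod_cast Finset.card_pos.mpr (A.P_nonempty i j1 (ne_of_lt h1))
  have hm2nonneg : (0:ℝ) ≤ ((A.P i j2).card : ℝ) := Nat.cast_nonneg _
  have hδ1000 : δ ≤ 1 / 1000 := by linarith only [hδε, hε, hδ]
  have hβ1 : δ ≤ (rstar : ℝ) * δ := by
    have h1r : (1:ℝ) ≤ (rstar : ℝ) := by exact_mod_cast hr1
    have h := mul_le_mul_of_nonneg_right h1r hδ.le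
    linarith only [h]
  have hβ2 : (rstar : ℝ) * δ ≤ 1 / 2 := by
    have h2δ : (0:ℝ) < 2 * δ := by linarith
    rw [le_div_iff₀ h2δ] at hr2
    linarith only [hr2]
  have hT : ((((A.P i j2) ×ˢ (A.P i j1)).filter (fun p =>
        A.Qadj ε i j2 k p.1 x ∧ A.Qadj ε i j1 k p.2 x ∧
          A.Qadj ε i j1 j2 p.2 p.1)).card)
      = ∑ y ∈ A.P i j2, ((A.P i j1).filter (fun z =>
          A.Qadj ε i j2 k y x ∧ A.Qadj ε i j1 k z x ∧ A.Qadj ε i j1 j2 z y)).card :=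
    card_filter_product' (A.P i j2) (A.P i j1)
      (fun a b => A.Qadj ε i j2 k a x ∧ A.Qadj ε i j1 k b x ∧ A.Qadj ε i j1 j2 b a)
  set β : ℝ := (rstar : ℝ) * δ with hβdef
  set p1 : ℝ := ((A.P i j1).card : ℝ) with hp1def
  set m2 : ℝ := ((A.P i j2).card : ℝ) with hm2def
  set s : ℝ := (1/2 - β) * p1 with hsdef
  set t : ℝ := (1/2 + (β + δ)) * p1 with htdef
  have hs0 : 0 ≤ s := by
    rw [hsdef]; apply mul_nonneg _ hp1pos.le; linarith only [hβ2]
  have hst : s ≤ t := by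
    rw [hsdef, htdef]
    apply mul_le_mul_of_nonneg_right _ hp1pos.le; linarith only [hβ1, hδ]
  have ht0 : 0 ≤ t := le_trans hs0 hst
  have hcast : ∀ y : ℕ, ((((1:ℝ)/2 + ((rstar + 1 : ℕ) : ℝ) * δ) * p1 ≤
      (A.degQ ε i j1 j2 y : ℝ)) ↔ (t ≤ (A.degQ ε i j1 j2 y : ℝ))) := by
    intro y
    have heq : ((1:ℝ)/2 + ((rstar + 1 : ℕ) : ℝ) * δ) * p1
        = (1/2 + ((rstar : ℝ) * δ + δ)) * p1 := by push_cast; ring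
    rw [htdef, hβdef, heq]
  set B : ℕ → ℝ := fun y =>
    if ((1:ℝ)/2 + ((rstar + 1 : ℕ) : ℝ) * δ) * p1 ≤ (A.degQ ε i j1 j2 y : ℝ) then p1^2
    else if A.Qadj ε i j2 k y x then s^2 else t^2 with hBdef
  have key : ∀ y ∈ A.P i j2, ((A.degQ ε i j1 j2 y : ℝ))^2 ≤
      (1 + δ) * p1 * ((((A.P i j1).filter (fun z =>
        A.Qadj ε i j2 k y x ∧ A.Qadj ε i j1 k z x ∧
          A.Qadj ε i j1 j2 z y)).card : ℝ)) + B y := by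
    intro y hy
    have hdp1 : (A.degQ ε i j1 j2 y : ℝ) ≤ p1 := by
      rw [hp1def]
      exact_mod_cast (Finset.card_filter_le _ _ :
        A.degQ ε i j1 j2 y ≤ (A.P i j1).card)
    have hd0 : (0:ℝ) ≤ (A.degQ ε i j1 j2 y : ℝ) := Nat.cast_nonneg _
    have hc0 : (0:ℝ) ≤ ((((A.P i j1).filter (fun z =>
        A.Qadj ε i j2 k y x ∧ A.Qadj ε i j1 k z x ∧
          A.Qadj ε i j1 j2 z y)).card : ℝ)) := Nat.cast_nonneg _
    have hcoef : (0:ℝ) ≤ (1 + δ) * p1 :=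
      mul_nonneg (by linarith only [hδ]) hp1pos.le
    by_cases hc1 : ((1:ℝ)/2 + ((rstar + 1 : ℕ) : ℝ) * δ) * p1 ≤ (A.degQ ε i j1 j2 y : ℝ)
    · have hBy : B y = p1^2 := by simp only [hBdef]; rw [if_pos hc1]
      rw [hBy]
      nlinarith only [hdp1, hd0, mul_nonneg hcoef hc0]
    · have hdlt : (A.degQ ε i j1 j2 y : ℝ) < t := by
        rw [← not_le, ← hcast y]; exact hc1
      by_cases hc2 : A.Qadj ε i j2 k y x
      · have hBy : B y = s^2 := by
          simp only [hBdef]; rw [if_neg hc1, if_pos hc2]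
        rw [hBy]
        have hNy : ((A.P i j1).filter (fun z =>
            A.Qadj ε i j2 k y x ∧ A.Qadj ε i j1 k z x ∧ A.Qadj ε i j1 j2 z y))
            = ((A.P i j1).filter (fun z => A.Qadj ε i j1 k z x))
              ∩ ((A.P i j1).filter (fun z => A.Qadj ε i j1 j2 z y)) := by
          rw [← Finset.filter_and]
          apply Finset.filter_congr
          intro z hz
          simp [hc2]
        rw [hNy]
        set N1 := (A.P i j1).filter (fun z => A.Qadj ε i j1 k z x) with hN1def
        set Ny := (A.P i j1).filter (fun z => A.Qadj ε i j1 j2 z y) with hNydef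
        have hunion : (N1 ∪ Ny).card ≤ (A.P i j1).card := by
          rw [hN1def, hNydef]
          exact Finset.card_le_card (Finset.union_subset (Finset.filter_subset _ _)
            (Finset.filter_subset _ _))
        have hie : N1.card + Ny.card = (N1 ∪ Ny).card + (N1 ∩ Ny).card :=
          (Finset.card_union_add_card_inter _ _).symm
        have hN1card : (1/2 + β) * p1 ≤ (N1.card : ℝ) := by
          rw [hN1def]; exact hN1
        have hNycard : (Ny.card : ℝ) = (A.degQ ε i j1 j2 y : ℝ) := by
          rw [hNydef]; rfl
        have hcy : (A.degQ ε i j1 j2 y : ℝ) + (N1.card : ℝ) - p1 ≤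
            ((N1 ∩ Ny).card : ℝ) := by
          have h2 : ((N1 ∪ Ny).card : ℝ) ≤ p1 := by
            rw [hp1def]; exact_mod_cast hunion
          have h3 : ((N1.card : ℝ)) + ((Ny.card : ℝ)) =
              ((N1 ∪ Ny).card : ℝ) + ((N1 ∩ Ny).card : ℝ) := by exact_mod_cast hie
          linarith
        have hds : (A.degQ ε i j1 j2 y : ℝ) - s ≤ ((N1 ∩ Ny).card : ℝ) := by
          rw [hsdef]; linarith only [hcy, hN1card]
        have hdt : (A.degQ ε i j1 j2 y : ℝ) + s ≤ (1 + δ) * p1 := by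
          rw [hsdef]; rw [htdef] at hdlt; linarith only [hdlt]
        have hic0 : (0:ℝ) ≤ ((N1 ∩ Ny).card : ℝ) := Nat.cast_nonneg _
        linarith only [mul_nonneg hic0 (sub_nonneg.mpr hdt),
          mul_le_mul_of_nonneg_right hds
            (by linarith only [hd0, hs0] : (0:ℝ) ≤ (A.degQ ε i j1 j2 y : ℝ) + s)]
      · have hBy : B y = t^2 := by
          simp only [hBdef]; rw [if_neg hc1, if_neg hc2]
        rw [hBy]
        nlinarith only [hdlt, hd0, ht0, mul_nonneg hcoef hc0]
  have hsumkey : ∑ y ∈ A.P i j2, ((A.degQ ε i j1 j2 y : ℝ))^2 ≤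
      (1 + δ) * p1 * (∑ y ∈ A.P i j2, ((((A.P i j1).filter (fun z =>
        A.Qadj ε i j2 k y x ∧ A.Qadj ε i j1 k z x ∧
          A.Qadj ε i j1 j2 z y)).card : ℝ)))
      + ∑ y ∈ A.P i j2, B y := by
    rw [Finset.mul_sum, ← Finset.sum_add_distrib]
    exact Finset.sum_le_sum key
  set a1 : ℝ := (((A.P i j2).filter (fun y =>
      ((1:ℝ)/2 + ((rstar + 1 : ℕ) : ℝ) * δ) * p1 ≤
        (A.degQ ε i j1 j2 y : ℝ))).card : ℝ) with ha1def
  set a2 : ℝ := ((((A.P i j2).filter (fun y =>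
      ¬ ((1:ℝ)/2 + ((rstar + 1 : ℕ) : ℝ) * δ) * p1 ≤
        (A.degQ ε i j1 j2 y : ℝ))).filter
      (fun y => A.Qadj ε i j2 k y x)).card : ℝ) with ha2def
  set a3 : ℝ := ((((A.P i j2).filter (fun y =>
      ¬ ((1:ℝ)/2 + ((rstar + 1 : ℕ) : ℝ) * δ) * p1 ≤
        (A.degQ ε i j1 j2 y : ℝ))).filter
      (fun y => ¬ A.Qadj ε i j2 k y x)).card : ℝ) with ha3def
  have hsumB : ∑ y ∈ A.P i j2, B y = a1 * p1^2 + a2 * s^2 + a3 * t^2 := by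
    rw [hBdef]
    rw [Finset.sum_ite, Finset.sum_ite, Finset.sum_const, Finset.sum_const,
      Finset.sum_const]
    rw [ha1def, ha2def, ha3def]
    push_cast
    ring
  have ha1 : a1 < δ * m2 := by
    have heq : ((A.P i j2).filter (fun y =>
        ((1:ℝ)/2 + ((rstar + 1 : ℕ) : ℝ) * δ) * p1 ≤ (A.degQ ε i j1 j2 y : ℝ)))
        = A.Sset ε δ i j1 j2 (rstar + 1) := by
      rw [hp1def]; rfl
    rw [ha1def, heq, hm2def]
    exact hS'
  have ha10 : 0 ≤ a1 := Nat.cast_nonneg _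
  have ha20 : 0 ≤ a2 := Nat.cast_nonneg _
  have ha30 : 0 ≤ a3 := Nat.cast_nonneg _
  have hpart : a1 + a2 + a3 = m2 := by
    rw [ha1def, ha2def, ha3def, hm2def]
    have hh2 := card_filter_not'
      ((A.P i j2).filter (fun y =>
        ¬ ((1:ℝ)/2 + ((rstar + 1 : ℕ) : ℝ) * δ) * p1 ≤ (A.degQ ε i j1 j2 y : ℝ)))
      (fun y => A.Qadj ε i j2 k y x)
    have hh1 := card_filter_not'
      (A.P i j2)
      (fun y => ((1:ℝ)/2 + ((rstar + 1 : ℕ) : ℝ) * δ) * p1 ≤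
        (A.degQ ε i j1 j2 y : ℝ))
    have hbig : (((A.P i j2).filter (fun y =>
        ((1:ℝ)/2 + ((rstar + 1 : ℕ) : ℝ) * δ) * p1 ≤
          (A.degQ ε i j1 j2 y : ℝ))).card : ℕ)
        + ((((A.P i j2).filter (fun y =>
        ¬ ((1:ℝ)/2 + ((rstar + 1 : ℕ) : ℝ) * δ) * p1 ≤
          (A.degQ ε i j1 j2 y : ℝ))).filter
          (fun y => A.Qadj ε i j2 k y x)).card : ℕ)
        + ((((A.P i j2).filter (fun y =>
        ¬ ((1:ℝ)/2 + ((rstar + 1 : ℕ) : ℝ) * δ) * p1 ≤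
          (A.degQ ε i j1 j2 y : ℝ))).filter
          (fun y => ¬ A.Qadj ε i j2 k y x)).card : ℕ)
        = (A.P i j2).card := by
      omega
    exact_mod_cast hbig
  have ha12 : (1/2 + β) * m2 ≤ a1 + a2 := by
    have hsub : (A.P i j2).filter (fun y => A.Qadj ε i j2 k y x) ⊆
        ((A.P i j2).filter (fun y =>
          ((1:ℝ)/2 + ((rstar + 1 : ℕ) : ℝ) * δ) * p1 ≤
            (A.degQ ε i j1 j2 y : ℝ))) ∪
        (((A.P i j2).filter (fun y =>
          ¬ ((1:ℝ)/2 + ((rstar + 1 : ℕ) : ℝ) * δ) * p1 ≤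
            (A.degQ ε i j1 j2 y : ℝ))).filter
          (fun y => A.Qadj ε i j2 k y x)) := by
      intro y hy
      obtain ⟨hyP, hyQ⟩ := Finset.mem_filter.mp hy
      by_cases hth : ((1:ℝ)/2 + ((rstar + 1 : ℕ) : ℝ) * δ) * p1 ≤
        (A.degQ ε i j1 j2 y : ℝ)
      · exact Finset.mem_union_left _ (Finset.mem_filter.mpr ⟨hyP, hth⟩)
      · exact Finset.mem_union_right _ (Finset.mem_filter.mpr
          ⟨Finset.mem_filter.mpr ⟨hyP, hth⟩, hyQ⟩)
    have hcard := le_trans (Finset.card_le_card hsub) (Finset.card_union_le _ _)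
    have hN2' : (1/2 + β) * m2 ≤
        (((A.P i j2).filter (fun y => A.Qadj ε i j2 k y x)).card : ℝ) := hN2
    have hle : (((A.P i j2).filter (fun y => A.Qadj ε i j2 k y x)).card : ℝ)
        ≤ a1 + a2 := by
      rw [ha1def, ha2def]; exact_mod_cast hcard
    linarith only [hN2', hle]
  have hBbound : ∑ y ∈ A.P i j2, B y ≤
      δ * m2 * p1^2 + (1/2 + β - δ) * m2 * s^2 + (1/2 - β + δ) * m2 * t^2 := by
    rw [hsumB]
    have hb1 : a1 * p1^2 ≤ δ * m2 * p1^2 := by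
      nlinarith only [ha1, sq_nonneg p1]
    have hs2t2 : s^2 - t^2 ≤ 0 := by nlinarith only [hs0, hst]
    have ha2ge : (1/2 + β - δ) * m2 ≤ a2 := by linarith only [ha12, ha1]
    have hb2 : a2 * (s^2 - t^2) ≤ ((1/2 + β - δ) * m2) * (s^2 - t^2) := by
      linarith only [mul_nonneg (sub_nonneg.mpr ha2ge) (neg_nonneg.mpr hs2t2)]
    have h3 : a3 = m2 - a1 - a2 := by linarith only [hpart]
    have h3t : a3 * t^2 = (m2 - a1 - a2) * t^2 := by rw [h3]
    linarith only [hb1, hb2, h3t, mul_nonneg ha10 (sq_nonneg t)]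
  have hE : δ * (1 + δ) + δ + (1/2 + β - δ) * (1/2 - β)^2
      + (1/2 - β + δ) * (1/2 + β + δ)^2 ≤ 1/4 + ε/2 := by
    have h12β : (0:ℝ) ≤ 1/2 - β := by linarith only [hβ2]
    nlinarith only [hδ, hδε, hβ2, hδ1000, sq_nonneg β,
      mul_nonneg hδ.le (sq_nonneg β),
      mul_nonneg hδ.le h12β,
      mul_nonneg (mul_nonneg hδ.le hδ.le) h12β,
      mul_le_mul_of_nonneg_left hδ1000 hδ.le,
      mul_le_mul_of_nonneg_left hδ1000 (mul_nonneg hδ.le hδ.le)]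
  have hfinal : δ * (1 + δ) * m2 * p1^2 ≤
      (1 + δ) * p1 * (∑ y ∈ A.P i j2, ((((A.P i j1).filter (fun z =>
        A.Qadj ε i j2 k y x ∧ A.Qadj ε i j1 k z x ∧
          A.Qadj ε i j1 j2 z y)).card : ℝ))) := by
    have hSS' : (1/4 + ε/2) * p1^2 * m2 ≤
        ∑ y ∈ A.P i j2, ((A.degQ ε i j1 j2 y : ℝ))^2 := hSS
    have hs2 : s^2 = (1/2 - β)^2 * p1^2 := by rw [hsdef]; ring
    have ht2 : t^2 = (1/2 + β + δ)^2 * p1^2 := by rw [htdef]; ring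
    rw [hs2, ht2] at hBbound
    have hEm := mul_le_mul_of_nonneg_right hE (mul_nonneg hm2nonneg (sq_nonneg p1))
    linarith only [hSS', hsumkey, hBbound, hEm]
  have hTc : ((((A.P i j2) ×ˢ (A.P i j1)).filter (fun p =>
        A.Qadj ε i j2 k p.1 x ∧ A.Qadj ε i j1 k p.2 x ∧
          A.Qadj ε i j1 j2 p.2 p.1)).card : ℝ)
      = ∑ y ∈ A.P i j2, ((((A.P i j1).filter (fun z =>
        A.Qadj ε i j2 k y x ∧ A.Qadj ε i j1 k z x ∧
          A.Qadj ε i j1 j2 z y)).card : ℝ)) := by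
    rw [hT]; push_cast; ring
  rw [hTc]
  have h1δ : (0:ℝ) < 1 + δ := by linarith only [hδ]
  nlinarith only [hfinal, mul_pos h1δ hp1pos]
end
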